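/- Let q be a prime power and f ∈ 𝔽_q[t][x] a square-free polynomial of positive degree k in x. If for a prime (monic irreducible) P ∈ 𝔽_q[t], P does not divide the resultant Res_x(f, ∂f/∂x)·Res_x(f, ∂f/∂t), then the number of residues a mod P² with f(a) ≡ 0 (mod P²) is at most the number of residues a mod P with f(a) ≡ 0 (mod P). -/

import Mathlib

open Polynomial Matrix

/-- The Sylvester matrix of two polynomials `f, g` over a commutative ring. -/
noncomputable def sylvesterMatrix {R : Type*} [CommRing R] (f g : R[X]) :
    Matrix (Fin (g.natDegree + f.natDegree)) (Fin (g.natDegree + f.natDegree)) R :=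
  fun i j =>
    match finSumFinEquiv.symm i with
    | Sum.inl i' => if (i' : ℕ) ≤ (j : ℕ) then f.coeff ((j : ℕ) - (i' : ℕ)) else 0
    | Sum.inr i' => if (i' : ℕ) ≤ (j : ℕ) then g.coeff ((j : ℕ) - (i' : ℕ)) else 0

/-- The resultant of two polynomials, as the determinant of their Sylvester matrix. -/
noncomputable def resultant {R : Type*} [CommRing R] (f g : R[X]) : R :=
  (sylvesterMatrix f g).det

/-- Coefficient-wise derivative in `t` of an element of `𝔽_q[t][x]`. -/
noncomputable def tderiv {Fq : Type*} [Field Fq] (f : Polynomial (Polynomial Fq)) :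
    Polynomial (Polynomial Fq) :=
  f.sum fun n c => Polynomial.C (Polynomial.derivative c) * Polynomial.X ^ n

/-- For a square-free `f ∈ 𝔽_q[t][x]` of positive degree in `x` and a monic irreducible
`P ∈ 𝔽_q[t]` not dividing `Res_x(f, ∂f/∂x) · Res_x(f, ∂f/∂t)`, the number of residues
`a mod P²` with `f(a) ≡ 0 (mod P²)` is at most the number of residues `a mod P` with
`f(a) ≡ 0 (mod P)`, i.e. `ρ(P²) ≤ ρ(P)`. -/
lemma sum_key {R : Type*} [CommRing R] (p : R[X]) (n : ℕ) (i' : ℕ)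
    (hdeg : i' + p.natDegree < n) :
    (∑ j : Fin n, (if i' ≤ (j : ℕ) then C (p.coeff ((j : ℕ) - i')) else 0) * X ^ (j : ℕ))
      = X ^ i' * p := by
  ext m
  rw [Polynomial.finset_sum_coeff]
  have hterm : ∀ j : Fin n,
      ((if i' ≤ (j : ℕ) then C (p.coeff ((j : ℕ) - i')) else 0) * X ^ (j : ℕ)).coeff m
        = if m = (j : ℕ) then (if i' ≤ (j : ℕ) then p.coeff ((j : ℕ) - i') else 0) else 0 := by
    intro j
    split_ifs with h1 h2 h2 <;>
      simp_all [coeff_C_mul, coeff_X_pow]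
  rw [Finset.sum_congr rfl fun j _ => hterm j]
  rw [Fin.sum_univ_eq_sum_range (fun j => if m = j then (if i' ≤ j then p.coeff (j - i') else 0) else 0)]
  rw [Finset.sum_ite_eq (Finset.range n) m (fun j => if i' ≤ j then p.coeff (j - i') else 0)]
  rw [mul_comm, Polynomial.coeff_mul_X_pow']
  by_cases hm : m ∈ Finset.range n
  · simp [hm]
  · simp only [hm, if_neg]
    simp only [Finset.mem_range, not_lt] at hm
    have h1 : i' ≤ m := by omega
    rw [if_neg (by simpa using hm), if_pos h1]
    exact (Polynomial.coeff_eq_zero_of_natDegree_lt (by omega)).symm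

lemma resultant_mem_span {R : Type*} [CommRing R] (f g : R[X])
    (hn : 0 < g.natDegree + f.natDegree) :
    ∃ u v : R[X], u * f + v * g = C (_root_.resultant f g) := by
  set n := g.natDegree + f.natDegree with hndef
  set M : Matrix (Fin n) (Fin n) R[X] := (sylvesterMatrix f g).map (C : R → R[X]) with hM
  set vv : Fin n → R[X] := fun j => X ^ (j : ℕ) with hvv
  have key : M.mulVec vv = fun i =>
      match finSumFinEquiv.symm i with
      | Sum.inl i' => X ^ (i' : ℕ) * f
      | Sum.inr i' => X ^ (i' : ℕ) * g := by
    funext i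
    rcases h : finSumFinEquiv.symm i with i' | i'
    · show ∑ j, M i j * vv j = _
      have : ∀ j : Fin n, M i j = if (i' : ℕ) ≤ (j : ℕ) then C (f.coeff ((j : ℕ) - (i' : ℕ))) else 0 := by
        intro j
        simp only [hM, Matrix.map_apply, sylvesterMatrix, h]
        split_ifs <;> simp
      simp only [this]
      exact sum_key f n i' (by have := i'.2; omega)
    · show ∑ j, M i j * vv j = _
      have : ∀ j : Fin n, M i j = if (i' : ℕ) ≤ (j : ℕ) then C (g.coeff ((j : ℕ) - (i' : ℕ))) else 0 := by
        intro j
        simp only [hM, Matrix.map_apply, sylvesterMatrix, h]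
        split_ifs <;> simp
      simp only [this]
      exact sum_key g n i' (by have := i'.2; omega)
  have cramer : (adjugate M).mulVec (M.mulVec vv) = M.det • vv := by
    rw [Matrix.mulVec_mulVec, Matrix.adjugate_mul, Matrix.smul_mulVec, Matrix.one_mulVec]
  have hdet : M.det = C (_root_.resultant f g) := ((C : R →+* R[X]).map_det (sylvesterMatrix f g)).symm
  refine ⟨∑ i' : Fin g.natDegree, adjugate M ⟨0, hn⟩ (finSumFinEquiv (Sum.inl i')) * X ^ (i' : ℕ),
    ∑ i' : Fin f.natDegree, adjugate M ⟨0, hn⟩ (finSumFinEquiv (Sum.inr i')) * X ^ (i' : ℕ), ?_⟩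
  have h0 : (adjugate M).mulVec (M.mulVec vv) ⟨0, hn⟩ = C (_root_.resultant f g) := by
    rw [cramer, hdet]
    show C (_root_.resultant f g) • vv ⟨0, hn⟩ = _
    simp [hvv]
  rw [key] at h0
  rw [← h0]
  show _ = ∑ i, adjugate M ⟨0, hn⟩ i * _
  rw [← Equiv.sum_comp finSumFinEquiv (fun i => adjugate M ⟨0, hn⟩ i *
      (match finSumFinEquiv.symm i with
        | Sum.inl i' => X ^ (i' : ℕ) * f
        | Sum.inr i' => X ^ (i' : ℕ) * g))]
  rw [Fintype.sum_sum_type]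
  simp only [Equiv.symm_apply_apply]
  rw [Finset.sum_mul, Finset.sum_mul]
  refine congrArg₂ (· + ·) ?_ ?_ <;> · apply Finset.sum_congr rfl; intro i' _; ring

theorem rho_sq_le_rho_of_not_dvd_resultant (Fq : Type*) [Field Fq] [Fintype Fq]
    (f : Polynomial (Polynomial Fq)) (hf : Squarefree f) (k : ℕ) (hk : f.natDegree = k)
    (hkpos : 0 < k)
    (P : Polynomial Fq) (hP : Irreducible P) (hPm : P.Monic)
    (hres : ¬ P ∣ _root_.resultant f (derivative f) * _root_.resultant f (tderiv f)) :
    {a : Polynomial Fq | a.degree < (P ^ 2).degree ∧ P ^ 2 ∣ f.eval a}.ncard ≤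
      {a : Polynomial Fq | a.degree < P.degree ∧ P ∣ f.eval a}.ncard := by
  have hP0 : P ≠ 0 := hP.ne_zero
  have hres1 : ¬ P ∣ _root_.resultant f (derivative f) := fun h => hres (h.mul_right _)
  -- derivative is a non-residue at every root mod P
  have hderiv : ∀ b : Polynomial Fq, P ∣ f.eval b → ¬ P ∣ (derivative f).eval b := by
    intro b hb hdb
    obtain ⟨u, v, huv⟩ := resultant_mem_span f (derivative f) (by omega)
    apply hres1
    have h2 := congrArg (Polynomial.eval b) huv
    simp only [eval_add, eval_mul, eval_C] at h2
    rw [← h2]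
    exact dvd_add (hb.mul_left _) (hdb.mul_left _)
  -- finiteness of target set
  haveI : Finite (Polynomial.degreeLT Fq P.natDegree) :=
    Finite.of_equiv _ (Polynomial.degreeLTEquiv Fq P.natDegree).symm.toEquiv
  have ht : {a : Polynomial Fq | a.degree < P.degree ∧ P ∣ f.eval a}.Finite := by
    apply Set.Finite.subset (Set.toFinite (Polynomial.degreeLT Fq P.natDegree : Set (Polynomial Fq)))
    intro a ha
    have := ha.1
    rw [Polynomial.degree_eq_natDegree hP0] at this
    exact Polynomial.mem_degreeLT.mpr this
  apply Set.ncard_le_ncard_of_injOn (fun a => a %ₘ P) ?_ ?_ ht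
  · rintro a ⟨hdeg, hdvd⟩
    refine ⟨Polynomial.degree_modByMonic_lt a hPm, ?_⟩
    have h1 : P ∣ a - a %ₘ P := by
      rw [Polynomial.modByMonic_eq_sub_mul_div a P]
      exact ⟨a /ₘ P, by ring⟩
    have h2 : P ∣ f.eval a - f.eval (a %ₘ P) :=
      dvd_trans h1 (Polynomial.sub_dvd_eval_sub a (a %ₘ P) f)
    have h3 : P ∣ f.eval a := dvd_trans (dvd_pow_self P two_ne_zero) hdvd
    have := dvd_sub h3 h2
    simpa using this
  · rintro a ⟨hadeg, hadvd⟩ b ⟨hbdeg, hbdvd⟩ hab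
    simp only at hab
    obtain ⟨c, hc⟩ : P ∣ a - b := by
      have h1 := Polynomial.modByMonic_eq_sub_mul_div a P
      have h2 := Polynomial.modByMonic_eq_sub_mul_div b P
      refine ⟨a /ₘ P - b /ₘ P, ?_⟩
      have : a - P * (a /ₘ P) = b - P * (b /ₘ P) := by rw [← h1, ← h2, hab]
      linear_combination this
    have hba : b + P * c = a := by linear_combination -hc
    obtain ⟨kk, hkk⟩ := f.binomExpansion b (P * c)
    have hfb : P ∣ f.eval b := dvd_trans (dvd_pow_self P two_ne_zero) hbdvd
    have hfb' : ¬ P ∣ (derivative f).eval b := hderiv b hfb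
    have hsq : P ^ 2 ∣ (P * c) ^ 2 := ⟨c ^ 2, by ring⟩
    have hdvd2 : P ^ 2 ∣ (derivative f).eval b * (P * c) := by
      have h1 : (derivative f).eval b * (P * c) =
          f.eval (b + P * c) - f.eval b - kk * (P * c) ^ 2 := by rw [hkk]; ring
      rw [h1]
      exact dvd_sub (dvd_sub (hba ▸ hadvd) hbdvd) (hsq.mul_left kk)
    have hPc : P ∣ (derivative f).eval b * c := by
      obtain ⟨e, he⟩ := hdvd2
      have h1 : P * P ∣ P * ((derivative f).eval b * c) :=
        ⟨e, by linear_combination he⟩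
      exact (mul_dvd_mul_iff_left hP0).mp h1
    have hc' : P ∣ c := (hP.prime.dvd_mul.mp hPc).resolve_left hfb'
    have hP2ab : P ^ 2 ∣ a - b := by
      obtain ⟨d, hd⟩ := hc'
      exact ⟨d, by rw [hc, hd]; ring⟩
    by_contra hne
    have hab0 : a - b ≠ 0 := sub_ne_zero.mpr hne
    have := Polynomial.degree_le_of_dvd hP2ab hab0
    have hlt : (a - b).degree < (P ^ 2).degree :=
      lt_of_le_of_lt (Polynomial.degree_sub_le a b) (max_lt hadeg hbdeg)
    exact absurd this (not_le.mpr hlt)
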